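/- Let n ∈ ℕ and let X, Y be Hausdorff topological spaces. Suppose f : X → Y and g : Y → X are continuous maps such that g ∘ f is homotopic to the identity of X and f ∘ g is homotopic to the identity of Y. Then f maps every π_n-wild point of X to a π_n-wild point of Y, g maps every π_n-wild point of Y to a π_n-wild point of X, and the restrictions f| : w_n(X) → w_n(Y) and g| : w_n(Y) → w_n(X) (between the wild sets with their subspace topologies) satisfy: g| ∘ f| is homotopic to the identity of w_n(X) and f| ∘ g| is homotopic to the identity of w_n(Y). In particular, w_n(X) and w_n(Y) are homotopy equivalent. -/

import Mathlib

open Filter Topology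

/-- The unit `n`-sphere in `ℝ^(n+1)`. -/
abbrev Sph (n : ℕ) : Type :=
  Metric.sphere (0 : EuclideanSpace ℝ (Fin (n + 1))) 1

/-- The basepoint `s₀ = (1,0,…,0)` of the unit `n`-sphere. -/
noncomputable def spherePt (n : ℕ) : Sph n :=
  ⟨EuclideanSpace.single 0 1, by
    simp [mem_sphere_zero_iff_norm, EuclideanSpace.norm_single]⟩

/-- A continuous map `S^n → X` is essential if it is not homotopic to a constant map. -/
def Essential {n : ℕ} {X : Type*} [TopologicalSpace X] (f : C(Sph n, X)) : Prop :=
  ∀ x : X, ¬ f.Homotopic (ContinuousMap.const (Sph n) x)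

/-- `x` is a `π_n`-wild point of `X` if there is a sequence of essential maps
`S^n → X` based at `x` converging to the constant map at `x` in the compact-open
topology. -/
def IsWildPoint (n : ℕ) {X : Type*} [TopologicalSpace X] (x : X) : Prop :=
  ∃ f : ℕ → C(Sph n, X),
    (∀ k, f k (spherePt n) = x) ∧
    (∀ k, Essential (f k)) ∧
    Tendsto f atTop (𝓝 (ContinuousMap.const (Sph n) x))

/-- The `π_n`-wild set of `X`. -/
def wildSet (n : ℕ) (X : Type*) [TopologicalSpace X] : Set X :=
  {x | IsWildPoint n x}

/-- A continuous map is `π_n`-injective if precomposition reflects inessentiality. -/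
def PiNInjective (n : ℕ) {X Y : Type*} [TopologicalSpace X] [TopologicalSpace Y]
    (f : C(X, Y)) : Prop :=
  ∀ g : C(Sph n, X),
    (∃ y : Y, (f.comp g).Homotopic (ContinuousMap.const (Sph n) y)) →
    ∃ x : X, g.Homotopic (ContinuousMap.const (Sph n) x)

/-- `X` is `π_n`-rigid at `x`. -/
def IsRigidAt (n : ℕ) {X : Type*} [TopologicalSpace X] (x : X) : Prop :=
  ∃ f : ℕ → C(Sph n, X),
    (∀ k, f k (spherePt n) = x) ∧
    (∀ k, Essential (f k)) ∧
    Tendsto f atTop (𝓝 (ContinuousMap.const (Sph n) x)) ∧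
    ∀ β : C(unitInterval, X), β 0 = x →
      ∀ H : ℕ → C(Sph n × unitInterval, X),
        (∀ k s, H k (s, 0) = f k s) →
        (∀ k t, H k (spherePt n, t) = β t) →
        Tendsto H atTop (𝓝 (β.comp (ContinuousMap.snd (α := Sph n)))) →
        β 1 = x

/-- If `ψ ∘ φ` is homotopic to the identity, then `φ` maps `π_n`-wild points to
`π_n`-wild points. -/
lemma isWildPoint_map {n : ℕ} {X Y : Type*} [TopologicalSpace X] [TopologicalSpace Y]
    (φ : C(X, Y)) (ψ : C(Y, X)) (h : (ψ.comp φ).Homotopic (ContinuousMap.id X))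
    {x : X} (hx : IsWildPoint n x) : IsWildPoint n (φ x) := by
  obtain ⟨f, hbase, hess, htend⟩ := hx
  refine ⟨fun k => φ.comp (f k), fun k => by simp [hbase], ?_, ?_⟩
  · intro k y hc
    apply hess k (ψ y)
    have h1 : (ψ.comp (φ.comp (f k))).Homotopic
        (ψ.comp (ContinuousMap.const (Sph n) y)) :=
      (ContinuousMap.Homotopic.refl ψ).comp hc
    have h2 : ((ψ.comp φ).comp (f k)).Homotopic
        ((ContinuousMap.id X).comp (f k)) :=
      h.comp (ContinuousMap.Homotopic.refl (f k))
    rw [ContinuousMap.comp_assoc] at h2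
    have h3 : (f k).Homotopic (ψ.comp (ContinuousMap.const (Sph n) y)) := by
      have := (h2.symm.trans h1)
      simpa using this
    simpa using h3
  · have hcont := (ContinuousMap.continuous_postcomp φ).tendsto
      (ContinuousMap.const (Sph n) x)
    have := hcont.comp htend
    simpa [Function.comp_def] using this

/-- Time slices of a homotopy to the identity preserve wild points. -/
lemma slice_wild {n : ℕ} {Z : Type*} [TopologicalSpace Z] (F : C(Z, Z))
    (H : F.Homotopy (ContinuousMap.id Z)) (t : unitInterval) (z : Z)
    (hz : IsWildPoint n z) : IsWildPoint n (H (t, z)) := by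
  set Φ : C(Z, Z) := ⟨fun z => H (t, z),
    H.continuous.comp (continuous_const.prodMk continuous_id)⟩ with hΦ
  set σ : unitInterval → unitInterval := fun s =>
    ⟨max t.1 s.1, ⟨le_max_of_le_left t.2.1, max_le t.2.2 s.2.2⟩⟩ with hσ
  have hσc : Continuous σ :=
    Continuous.subtype_mk (continuous_const.max continuous_subtype_val) _
  have hσ0 : σ 0 = t := Subtype.ext (by simp [hσ, max_eq_left t.2.1])
  have hσ1 : σ 1 = 1 := Subtype.ext (by simp [hσ, max_eq_right t.2.2])
  have hhom : ((ContinuousMap.id Z).comp Φ).Homotopic (ContinuousMap.id Z) := by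
    refine ⟨⟨⟨fun p => H (σ p.1, p.2), ?_⟩, ?_, ?_⟩⟩
    · exact H.continuous.comp ((hσc.comp continuous_fst).prodMk continuous_snd)
    · intro z
      show H (σ 0, z) = _
      rw [hσ0]
      rfl
    · intro z
      show H (σ 1, z) = _
      rw [hσ1]
      exact H.apply_one z
  exact isWildPoint_map Φ (ContinuousMap.id Z) hhom hz

/-- homotopy invariance of the `π_n`-wild set. -/
theorem stmt0 {X Y : Type*} [TopologicalSpace X] [TopologicalSpace Y]
    [T2Space X] [T2Space Y] (n : ℕ) (f : C(X, Y)) (g : C(Y, X))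
    (hgf : (g.comp f).Homotopic (ContinuousMap.id X))
    (hfg : (f.comp g).Homotopic (ContinuousMap.id Y)) :
    (∀ x : X, IsWildPoint n x → IsWildPoint n (f x)) ∧
    (∀ y : Y, IsWildPoint n y → IsWildPoint n (g y)) ∧
    ∃ (f' : C(↥(wildSet n X), ↥(wildSet n Y))) (g' : C(↥(wildSet n Y), ↥(wildSet n X))),
      (∀ x : wildSet n X, (f' x : Y) = f (x : X)) ∧
      (∀ y : wildSet n Y, (g' y : X) = g (y : Y)) ∧
      (g'.comp f').Homotopic (ContinuousMap.id ↥(wildSet n X)) ∧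
      (f'.comp g').Homotopic (ContinuousMap.id ↥(wildSet n Y)) := by
  have hfw : ∀ x : X, IsWildPoint n x → IsWildPoint n (f x) :=
    fun x hx => isWildPoint_map f g hgf hx
  have hgw : ∀ y : Y, IsWildPoint n y → IsWildPoint n (g y) :=
    fun y hy => isWildPoint_map g f hfg hy
  refine ⟨hfw, hgw, ?_⟩
  obtain ⟨H⟩ := hgf
  obtain ⟨K⟩ := hfg
  refine ⟨⟨fun x => ⟨f x.1, hfw x.1 x.2⟩,
      Continuous.subtype_mk (f.continuous.comp continuous_subtype_val) _⟩,
    ⟨fun y => ⟨g y.1, hgw y.1 y.2⟩,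
      Continuous.subtype_mk (g.continuous.comp continuous_subtype_val) _⟩,
    fun _ => rfl, fun _ => rfl, ?_, ?_⟩
  · refine ⟨⟨⟨fun p => ⟨H (p.1, p.2.1), slice_wild (g.comp f) H p.1 p.2.1 p.2.2⟩, ?_⟩, ?_, ?_⟩⟩
    · exact Continuous.subtype_mk
        (H.continuous.comp (continuous_fst.prodMk
          (continuous_subtype_val.comp continuous_snd))) _
    · intro x
      exact Subtype.ext (H.apply_zero x.1)
    · intro x
      exact Subtype.ext (H.apply_one x.1)
  · refine ⟨⟨⟨fun p => ⟨K (p.1, p.2.1), slice_wild (f.comp g) K p.1 p.2.1 p.2.2⟩, ?_⟩, ?_, ?_⟩⟩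
    · exact Continuous.subtype_mk
        (K.continuous.comp (continuous_fst.prodMk
          (continuous_subtype_val.comp continuous_snd))) _
    · intro y
      exact Subtype.ext (K.apply_zero y.1)
    · intro y
      exact Subtype.ext (K.apply_one y.1)
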